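/- arXiv:2008.08843 — 4 statements merged into one kernel-verified Lean document; each statement's English description precedes it below -/
import Mathlib

section
/- Let $x, y \in \mathbb{R}^d$ with $y \in x + C_j$, where $C_j = \{ re : e \in B(\xi_j, 1/2) \cap S^{d-1},\ r > 0 \}$ is an open cone around the half-line through a unit vector $\xi_j$. Then $\bar{B}(x, |x-y|) \cap (x + C_j) \subset B(y, |x-y|)$. -/
open Metric

/-- Let `C` be the open cone of positive multiples of unit vectors within
distance `1/2` of the unit vector `ξ`. If `y ∈ x + C`, then
`closedBall x ‖x-y‖ ∩ (x + C) ⊆ ball y ‖x-y‖`. -/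
theorem closedBall_inter_cone_subset (d : ℕ) (ξ x y : EuclideanSpace ℝ (Fin d))
    (hξ : ‖ξ‖ = 1)
    (C : Set (EuclideanSpace ℝ (Fin d)))
    (hC : C = {z | ∃ r : ℝ, 0 < r ∧ ∃ e, ‖e‖ = 1 ∧ ‖e - ξ‖ < 1/2 ∧ z = r • e})
    (hy : y - x ∈ C) :
    ∀ z ∈ closedBall x (dist x y), z - x ∈ C → z ∈ ball y (dist x y) := by
  subst hC
  obtain ⟨r, hr, e, he1, he2, hyx⟩ := hy
  intro z hz hzC
  obtain ⟨s, hs, f, hf1, hf2, hzx⟩ := hzC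
  have hxy : dist x y = r := by
    rw [dist_comm, dist_eq_norm, hyx, norm_smul, he1, Real.norm_eq_abs,
      abs_of_pos hr, mul_one]
  have hsr : s ≤ r := by
    have : dist z x = s := by
      rw [dist_eq_norm, hzx, norm_smul, hf1, Real.norm_eq_abs, abs_of_pos hs, mul_one]
    rw [mem_closedBall, this, hxy] at hz
    exact hz
  have hef : ‖f - e‖ < 1 := by
    calc ‖f - e‖ ≤ ‖f - ξ‖ + ‖ξ - e‖ := norm_sub_le_norm_sub_add_norm_sub f ξ e
    _ < 1/2 + 1/2 := by
        have : ‖ξ - e‖ = ‖e - ξ‖ := norm_sub_rev _ _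
        rw [this]; linarith
    _ = 1 := by norm_num
  have hinner : (1:ℝ)/2 < inner ℝ f e := by
    have h1 : ‖f - e‖ ^ 2 = ‖f‖ ^ 2 - 2 * inner ℝ f e + ‖e‖ ^ 2 :=
      norm_sub_sq_real f e
    have h2 : ‖f - e‖ ^ 2 < 1 := by
      have := norm_nonneg (f - e)
      nlinarith
    rw [he1, hf1] at h1
    nlinarith
  rw [mem_ball, dist_eq_norm, hxy]
  have hzy : z - y = s • f - r • e := by
    rw [← hzx, ← hyx]; abel
  have hnormsq : ‖z - y‖ ^ 2 = s ^ 2 - 2 * (s * r * inner ℝ f e) + r ^ 2 := by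
    rw [hzy, norm_sub_sq_real, norm_smul, norm_smul, he1, hf1,
      real_inner_smul_left, real_inner_smul_right, Real.norm_eq_abs,
      Real.norm_eq_abs, abs_of_pos hr, abs_of_pos hs]
    ring
  have hlt : ‖z - y‖ ^ 2 < r ^ 2 := by
    nlinarith [mul_pos (mul_pos hs hr) (by linarith : (0:ℝ) < inner ℝ f e - 1/2),
      mul_nonneg hs.le (sub_nonneg.2 hsr)]
  exact lt_of_pow_lt_pow_left₀ 2 hr.le hlt
end

section
/- Let $P \subset \mathbb{R}^d$ be a finite set with at least 2 points, and let $\xi_1,\dots,\xi_p \in S^{d-1}$ be a maximal $1/4$-separated set, with associated open cones $C_j = \{re : e \in B(\xi_j,1/2)\cap S^{d-1}, r>0\}$. Define an edge set $\mathcal{E}$ by: for each $p_0 \in P$ and each $1 \le j \le p$ with $P \cap (p_0 + C_j) \setminus \{p_0\} \neq \emptyset$, add one edge from $p_0$ to a nearest point of $P \cap (p_0 + C_j)$. Then for every pair of distinct points $s, t \in P$, there exists a connected union of edges in $\mathcal{E}$ containing both $s$ and $t$ and contained in the closed ball $\bar{B}(t, |s - t|)$. -/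
open Metric

private lemma cone_key {E : Type*} [NormedAddCommGroup E] [InnerProductSpace ℝ E]
    (r s : ℝ) (hr : 0 < r) (hrs : r ≤ s)
    (e f ξ : E) (he : ‖e‖ = 1) (hf : ‖f‖ = 1) (heξ : ‖e - ξ‖ < 1/2) (hfξ : ‖f - ξ‖ < 1/2) :
    ‖s • f - r • e‖ < s := by
  have hs : 0 < s := lt_of_lt_of_le hr hrs
  have hef : ‖e - f‖ < 1 := by
    calc ‖e - f‖ ≤ ‖e - ξ‖ + ‖ξ - f‖ := norm_sub_le_norm_sub_add_norm_sub _ _ _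
    _ < 1/2 + 1/2 := by rw [norm_sub_rev ξ f]; linarith
    _ = 1 := by norm_num
  have h1 : ‖e - f‖ ^ 2 = ‖e‖ ^ 2 - 2 * inner ℝ e f + ‖f‖ ^ 2 := @norm_sub_sq_real E _ _ e f
  have hin : (1:ℝ)/2 < inner ℝ e f := by
    have : ‖e - f‖ ^ 2 < 1 := by nlinarith [norm_nonneg (e - f)]
    rw [h1, he, hf] at this; linarith
  have h2 : ‖s • f - r • e‖ ^ 2 = ‖s • f‖ ^ 2 - 2 * inner ℝ (s • f) (r • e) + ‖r • e‖ ^ 2 :=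
    @norm_sub_sq_real E _ _ _ _
  have h3 : inner ℝ (s • f) (r • e) = s * r * (inner ℝ f e : ℝ) := by
    rw [real_inner_smul_left, real_inner_smul_right]; ring
  have h4 : (inner ℝ f e : ℝ) = inner ℝ e f := real_inner_comm e f
  have h5 : ‖s • f‖ = s := by rw [norm_smul, hf, Real.norm_of_nonneg hs.le, mul_one]
  have h6 : ‖r • e‖ = r := by rw [norm_smul, he, Real.norm_of_nonneg hr.le, mul_one]
  have : ‖s • f - r • e‖ ^ 2 < s ^ 2 := by
    rw [h2, h3, h4, h5, h6]
    have h7 : s*r*(1/2) < s*r*(inner ℝ e f : ℝ) := by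
      exact mul_lt_mul_of_pos_left hin (mul_pos hs hr)
    have h8 : r*r ≤ s*r := mul_le_mul_of_nonneg_right hrs hr.le
    nlinarith [h7, h8]
  exact lt_of_pow_lt_pow_left₀ 2 hs.le this

/-- Let `P ⊆ ℝ^d` be a finite set with at least two points, `S` a maximal
`1/4`-separated set of unit vectors with cones `C_ξ = {re : e ∈ B(ξ,1/2) ∩ S^{d-1}, r > 0}`,
and let `ℰ` be an edge set containing, for each `p ∈ P` and each `ξ ∈ S` for which
`P ∩ (p + C_ξ)` is nonempty, an edge from `p` to a nearest point of `P ∩ (p + C_ξ)`.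
Then any two distinct points `s, t ∈ P` are joined by a connected union of edges of `ℰ`
contained in the closed ball `closedBall t (dist s t)`. -/
theorem spanning_graph_connects (d : ℕ) (P : Set (EuclideanSpace ℝ (Fin d)))
    (hPfin : P.Finite) (hP2 : 2 ≤ P.ncard)
    (S : Set (EuclideanSpace ℝ (Fin d)))
    (hS : S ⊆ sphere (0 : EuclideanSpace ℝ (Fin d)) 1)
    (hsep : S.Pairwise fun a b => 1/4 ≤ dist a b)
    (hmax : ∀ v ∈ sphere (0 : EuclideanSpace ℝ (Fin d)) 1, ∃ ξ ∈ S, dist v ξ < 1/4)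
    (Cone : EuclideanSpace ℝ (Fin d) → Set (EuclideanSpace ℝ (Fin d)))
    (hCone : ∀ ξ, Cone ξ = {z | ∃ r : ℝ, 0 < r ∧ ∃ e, ‖e‖ = 1 ∧ ‖e - ξ‖ < 1/2 ∧ z = r • e})
    (ℰ : Set (EuclideanSpace ℝ (Fin d) × EuclideanSpace ℝ (Fin d)))
    (hE : ∀ p ∈ P, ∀ ξ ∈ S, (P ∩ (fun z => p + z) '' Cone ξ).Nonempty →
      ∃ q ∈ P ∩ (fun z => p + z) '' Cone ξ, (p, q) ∈ ℰ ∧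
        ∀ q' ∈ P ∩ (fun z => p + z) '' Cone ξ, dist p q ≤ dist p q')
    (s t : EuclideanSpace ℝ (Fin d)) (hs : s ∈ P) (ht : t ∈ P) (hst : s ≠ t) :
    ∃ F : Finset (EuclideanSpace ℝ (Fin d) × EuclideanSpace ℝ (Fin d)),
      ↑F ⊆ ℰ ∧
      IsConnected (⋃ e ∈ F, segment ℝ e.1 e.2) ∧
      s ∈ ⋃ e ∈ F, segment ℝ e.1 e.2 ∧
      t ∈ ⋃ e ∈ F, segment ℝ e.1 e.2 ∧
      (⋃ e ∈ F, segment ℝ e.1 e.2) ⊆ closedBall t (dist s t) := by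
  classical
  -- the edge step: from any p ≠ t in P there is an edge (p, q) ∈ ℰ with dist q t < dist p t
  have step : ∀ p ∈ P, p ≠ t → ∃ q ∈ P, (p, q) ∈ ℰ ∧ dist q t < dist p t := by
    intro p hp hpt
    have hnorm : (0:ℝ) < ‖t - p‖ := by
      rw [norm_pos_iff, sub_ne_zero]; exact fun h => hpt h.symm
    set v : EuclideanSpace ℝ (Fin d) := ‖t - p‖⁻¹ • (t - p) with hv
    have hv1 : ‖v‖ = 1 := by
      rw [hv, norm_smul, Real.norm_of_nonneg (inv_nonneg.2 hnorm.le),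
        inv_mul_cancel₀ hnorm.ne']
    obtain ⟨ξ, hξS, hvξ⟩ := hmax v (by simpa [mem_sphere_zero_iff_norm] using hv1)
    have hvξ' : ‖v - ξ‖ < 1/2 := by
      have := hvξ; rw [dist_eq_norm] at this; linarith
    have htc : t - p ∈ Cone ξ := by
      rw [hCone]
      exact ⟨‖t - p‖, hnorm, v, hv1, hvξ', by rw [hv, smul_smul, mul_inv_cancel₀ hnorm.ne', one_smul]⟩
    have htimg : t ∈ P ∩ (fun z => p + z) '' Cone ξ :=
      ⟨ht, ⟨t - p, htc, by simp⟩⟩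
    obtain ⟨q, ⟨hqP, x, hxC, hqx⟩, hpqE, hmin⟩ := hE p hp ξ hξS ⟨t, htimg⟩
    rw [hCone] at hxC
    obtain ⟨r, hr, e, he1, heξ, hxe⟩ := hxC
    refine ⟨q, hqP, hpqE, ?_⟩
    have hq : q = p + r • e := by rw [← hqx, hxe]
    have hdpq : dist p q = r := by
      rw [hq, dist_comm, dist_eq_norm, add_sub_cancel_left, norm_smul, he1,
        Real.norm_of_nonneg hr.le, mul_one]
    have hrle : r ≤ ‖t - p‖ := by
      have := hmin t htimg
      rw [hdpq, dist_eq_norm, ← norm_sub_rev] at this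
      exact this
    have key := cone_key r ‖t - p‖ hr hrle e v ξ he1 hv1 heξ hvξ'
    have htv : ‖t - p‖ • v = t - p := by
      rw [hv, smul_smul, mul_inv_cancel₀ hnorm.ne', one_smul]
    rw [htv] at key
    calc dist q t = ‖(t - p) - r • e‖ := by
          rw [hq, dist_eq_norm', sub_add_eq_sub_sub]
    _ < ‖t - p‖ := key
    _ = dist p t := by rw [dist_eq_norm, norm_sub_rev]
  -- induction on number of strictly closer points
  have main : ∀ n : ℕ, ∀ p ∈ P, p ≠ t →
      (P ∩ {r | dist r t < dist p t}).ncard ≤ n →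
      ∃ F : Finset (EuclideanSpace ℝ (Fin d) × EuclideanSpace ℝ (Fin d)),
        ↑F ⊆ ℰ ∧
        IsConnected (⋃ e ∈ F, segment ℝ e.1 e.2) ∧
        p ∈ ⋃ e ∈ F, segment ℝ e.1 e.2 ∧
        t ∈ ⋃ e ∈ F, segment ℝ e.1 e.2 ∧
        (⋃ e ∈ F, segment ℝ e.1 e.2) ⊆ closedBall t (dist p t) := by
    intro n
    induction n with
    | zero =>
      intro p hp hpt hcard
      obtain ⟨q, hqP, _, hqlt⟩ := step p hp hpt
      exfalso
      have : q ∈ P ∩ {r | dist r t < dist p t} := ⟨hqP, hqlt⟩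
      have : 0 < (P ∩ {r | dist r t < dist p t}).ncard :=
        (Set.ncard_pos (hPfin.subset Set.inter_subset_left)).2 ⟨q, this⟩
      omega
    | succ n ih =>
      intro p hp hpt hcard
      obtain ⟨q, hqP, hpqE, hqlt⟩ := step p hp hpt
      by_cases hqt : q = t
      · subst hqt
        refine ⟨{(p, q)}, ?_, ?_, ?_, ?_, ?_⟩
        · simp [Set.singleton_subset_iff]; exact hpqE
        · simp only [Finset.set_biUnion_singleton]
          exact (convex_segment p q).isConnected ⟨p, left_mem_segment ℝ p q⟩
        · simp only [Finset.set_biUnion_singleton]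
          exact left_mem_segment ℝ p q
        · simp only [Finset.set_biUnion_singleton]
          exact right_mem_segment ℝ p q
        · simp only [Finset.set_biUnion_singleton]
          exact (convex_closedBall q (dist p q)).segment_subset
            (mem_closedBall.2 le_rfl) (mem_closedBall_self dist_nonneg)
      · have hsub : insert q (P ∩ {r | dist r t < dist q t}) ⊆ P ∩ {r | dist r t < dist p t} := by
          rintro x (rfl | ⟨hx1, hx2⟩)
          · exact ⟨hqP, hqlt⟩
          · exact ⟨hx1, lt_trans hx2 hqlt⟩
        have hfin : (P ∩ {r | dist r t < dist q t}).Finite := hPfin.subset Set.inter_subset_left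
        have hcard' : (P ∩ {r | dist r t < dist q t}).ncard ≤ n := by
          have h1 : (insert q (P ∩ {r | dist r t < dist q t})).ncard
              ≤ (P ∩ {r | dist r t < dist p t}).ncard :=
            Set.ncard_le_ncard hsub (hPfin.subset Set.inter_subset_left)
          have h2 : (insert q (P ∩ {r | dist r t < dist q t})).ncard
              = (P ∩ {r | dist r t < dist q t}).ncard + 1 :=
            Set.ncard_insert_of_notMem (fun h => lt_irrefl (dist q t) h.2) hfin
          omega
        obtain ⟨F, hF1, hF2, hF3, hF4, hF5⟩ := ih q hqP hqt hcard'
        refine ⟨insert (p, q) F, ?_, ?_, ?_, ?_, ?_⟩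
        · rw [Finset.coe_insert]
          exact Set.insert_subset hpqE hF1
        · rw [Finset.set_biUnion_insert]
          exact IsConnected.union ⟨q, right_mem_segment ℝ p q, hF3⟩
            ((convex_segment p q).isConnected ⟨p, left_mem_segment ℝ p q⟩) hF2
        · rw [Finset.set_biUnion_insert]
          exact Set.mem_union_left _ (left_mem_segment ℝ p q)
        · rw [Finset.set_biUnion_insert]
          exact Set.mem_union_right _ hF4
        · rw [Finset.set_biUnion_insert]
          apply Set.union_subset
          · exact (convex_closedBall t (dist p t)).segment_subset
              (mem_closedBall.2 le_rfl) (mem_closedBall.2 hqlt.le)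
          · exact hF5.trans (closedBall_subset_closedBall hqlt.le)
  exact main (P ∩ {r | dist r t < dist s t}).ncard s hs hst le_rfl
end

section
/- Let $0 < n < d$ and let $G(d,n)$ be the Grassmannian of $n$-dimensional linear subspaces of $\mathbb{R}^d$ with metric $d(V_1,V_2) = \|\pi_{V_1} - \pi_{V_2}\|$ (operator norm of the difference of the orthogonal projections). Let $W_1, W_2 \in G(d,n+1)$ and $V_1 \in G(d,n)$ with $V_1 \subset W_1$. Then there exists $V_2 \in G(d,n)$ with $V_2 \subset W_2$ and $d(V_1, V_2) \lesssim_d d(W_1, W_2)$. -/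
noncomputable def projL {d : ℕ} (V : Submodule ℝ (EuclideanSpace ℝ (Fin d))) :
    EuclideanSpace ℝ (Fin d) →L[ℝ] EuclideanSpace ℝ (Fin d) :=
  V.subtypeL.comp (V.orthogonalProjectionOnto)

section Aux

variable {d : ℕ}

local notation "E" => EuclideanSpace ℝ (Fin d)

lemma projL_apply_mem (V : Submodule ℝ E) (x : E) : projL V x ∈ V :=
  (V.orthogonalProjectionOnto x).2

lemma projL_eq_self {V : Submodule ℝ E} {x : E} (h : x ∈ V) : projL V x = x :=
  Submodule.starProjection_eq_self_iff.mpr h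

lemma norm_projL_apply_le (V : Submodule ℝ E) (x : E) : ‖projL V x‖ ≤ ‖x‖ := by
  have h1 : ‖projL V x‖ = ‖V.orthogonalProjectionOnto x‖ := rfl
  rw [h1]
  calc ‖V.orthogonalProjectionOnto x‖ ≤ ‖(V.orthogonalProjectionOnto : E →L[ℝ] V)‖ * ‖x‖ :=
        (V.orthogonalProjectionOnto).le_opNorm x
    _ ≤ 1 * ‖x‖ := by
        have := Submodule.orthogonalProjectionOnto_norm_le V
        have : (0:ℝ) ≤ ‖x‖ := norm_nonneg x
        nlinarith [Submodule.orthogonalProjectionOnto_norm_le V, norm_nonneg x]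
    _ = ‖x‖ := one_mul _

lemma norm_projL_le_one (V : Submodule ℝ E) : ‖projL V‖ ≤ 1 :=
  ContinuousLinearMap.opNorm_le_bound _ zero_le_one fun x => by
    rw [one_mul]; exact norm_projL_apply_le V x

lemma norm_sub_projL_le (V : Submodule ℝ E) (x w : E) (hw : w ∈ V) :
    ‖x - projL V x‖ ≤ ‖x - w‖ := by
  have h1 : ‖x - projL V x‖ = ⨅ v : V, ‖x - v‖ := Submodule.starProjection_minimal x
  rw [h1]
  exact ciInf_le ⟨0, fun r ⟨v, hv⟩ => hv ▸ norm_nonneg _⟩ (⟨w, hw⟩ : V)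

lemma projL_isSelfAdjoint (V : Submodule ℝ E) : IsSelfAdjoint (projL V) :=
  isSelfAdjoint_starProjection V

/-- Key quantitative lemma: bounds on mutual distances of subspaces control the
operator norm of the difference of projections. -/
lemma key_bound (U V : Submodule ℝ E) (εU εV : ℝ) (hεU : 0 ≤ εU) (hεV : 0 ≤ εV)
    (hU : ∀ u ∈ U, ‖u - projL V u‖ ≤ εU * ‖u‖)
    (hV : ∀ v ∈ V, ‖v - projL U v‖ ≤ εV * ‖v‖) :
    ‖projL U - projL V‖ ≤ εU + εV := by
  set A : E →L[ℝ] E := (1 - projL V).comp (projL U) with hA_def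
  set B : E →L[ℝ] E := (1 - projL U).comp (projL V) with hB_def
  have hA : ‖A‖ ≤ εU := by
    refine ContinuousLinearMap.opNorm_le_bound _ hεU fun x => ?_
    have h1 : A x = projL U x - projL V (projL U x) := rfl
    rw [h1]
    calc ‖projL U x - projL V (projL U x)‖ ≤ εU * ‖projL U x‖ :=
          hU _ (projL_apply_mem U x)
      _ ≤ εU * ‖x‖ := by
          exact mul_le_mul_of_nonneg_left (norm_projL_apply_le U x) hεU
  have hB : ‖B‖ ≤ εV := by
    refine ContinuousLinearMap.opNorm_le_bound _ hεV fun x => ?_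
    have h1 : B x = projL V x - projL U (projL V x) := rfl
    rw [h1]
    calc ‖projL V x - projL U (projL V x)‖ ≤ εV * ‖projL V x‖ :=
          hV _ (projL_apply_mem V x)
      _ ≤ εV * ‖x‖ := by
          exact mul_le_mul_of_nonneg_left (norm_projL_apply_le V x) hεV
  have hone : ContinuousLinearMap.adjoint (1 - projL U : E →L[ℝ] E) = 1 - projL U := by
    rw [map_sub, (projL_isSelfAdjoint U).adjoint_eq, ContinuousLinearMap.one_def,
      ContinuousLinearMap.adjoint_id]
  have hadj : ContinuousLinearMap.adjoint B = (projL V).comp (1 - projL U) := by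
    rw [hB_def, ContinuousLinearMap.adjoint_comp,
      (projL_isSelfAdjoint V).adjoint_eq, hone]
  have hBnorm : ‖(projL V).comp (1 - projL U)‖ = ‖B‖ := by
    rw [← hadj]
    exact (ContinuousLinearMap.adjoint : (E →L[ℝ] E) ≃ₗᵢ⋆[ℝ] (E →L[ℝ] E)).norm_map B
  have heq : projL U - projL V = A - (projL V).comp (1 - projL U) := by
    refine ContinuousLinearMap.ext fun x => ?_
    simp only [ContinuousLinearMap.sub_apply, ContinuousLinearMap.comp_apply,
      ContinuousLinearMap.one_apply, hA_def, map_sub]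
    abel
  calc ‖projL U - projL V‖ = ‖A - (projL V).comp (1 - projL U)‖ := by rw [heq]
    _ ≤ ‖A‖ + ‖(projL V).comp (1 - projL U)‖ := norm_sub_le _ _
    _ = ‖A‖ + ‖B‖ := by rw [hBnorm]
    _ ≤ εU + εV := add_le_add hA hB

/-- Any finite-dimensional subspace contains subspaces of all smaller dimensions. -/
lemma exists_sub_finrank (W : Submodule ℝ E) (n : ℕ) (h : n ≤ Module.finrank ℝ W) :
    ∃ V : Submodule ℝ E, V ≤ W ∧ Module.finrank ℝ V = n := by
  have : FiniteDimensional ℝ W := inferInstance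
  let b := Module.finBasis ℝ W
  let f : Fin n → E := fun i => (b (Fin.castLE h i) : E)
  have hli : LinearIndependent ℝ f := by
    have h1 : LinearIndependent ℝ fun i : Fin (Module.finrank ℝ W) => ((b i : W) : E) :=
      b.linearIndependent.map' W.subtype W.ker_subtype
    exact h1.comp (Fin.castLE h) (Fin.castLE_injective h)
  refine ⟨Submodule.span ℝ (Set.range f), ?_, ?_⟩
  · rw [Submodule.span_le]
    rintro x ⟨i, rfl⟩
    exact (b (Fin.castLE h i)).2
  · rw [finrank_span_eq_card hli, Fintype.card_fin]

end Aux

/-- Let `0 < n < d`, `W₁, W₂ ∈ G(d,n+1)` and `V₁ ∈ G(d,n)` with `V₁ ⊆ W₁`.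
Then there exists `V₂ ∈ G(d,n)` with `V₂ ⊆ W₂` and `d(V₁,V₂) ≲_d d(W₁,W₂)`, where
`d(V,V') = ‖π_V - π_{V'}‖`. -/
theorem grassmannian_plane_transfer (d n : ℕ) (hn : 0 < n) (hnd : n < d) :
    ∃ C : ℝ, 0 < C ∧
      ∀ W₁ W₂ V₁ : Submodule ℝ (EuclideanSpace ℝ (Fin d)),
        Module.finrank ℝ W₁ = n + 1 → Module.finrank ℝ W₂ = n + 1 →
        Module.finrank ℝ V₁ = n → V₁ ≤ W₁ →
        ∃ V₂ : Submodule ℝ (EuclideanSpace ℝ (Fin d)),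
          V₂ ≤ W₂ ∧ Module.finrank ℝ V₂ = n ∧
          ‖projL V₁ - projL V₂‖ ≤ C * ‖projL W₁ - projL W₂‖ := by
  refine ⟨4, by norm_num, fun W₁ W₂ V₁ hW₁ hW₂ hV₁ hV₁W₁ => ?_⟩
  set δ := ‖projL W₁ - projL W₂‖ with hδ_def
  have hδ0 : 0 ≤ δ := norm_nonneg _
  by_cases hsmall : δ < 1/2
  · -- small distance: project V₁ onto W₂
    have hbound : ∀ x ∈ V₁, ‖x - projL W₂ x‖ ≤ δ * ‖x‖ := by
      intro x hx
      have h1 : projL W₁ x = x := projL_eq_self (hV₁W₁ hx)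
      calc ‖x - projL W₂ x‖ = ‖(projL W₁ - projL W₂) x‖ := by
            rw [ContinuousLinearMap.sub_apply, h1]
        _ ≤ δ * ‖x‖ := (projL W₁ - projL W₂).le_opNorm x
    set V₂ : Submodule ℝ (EuclideanSpace ℝ (Fin d)) := V₁.map (projL W₂).toLinearMap with hV₂_def
    have hV₂W₂ : V₂ ≤ W₂ := by
      rintro _ ⟨x, _, rfl⟩
      exact projL_apply_mem W₂ x
    -- injectivity of projL W₂ on V₁
    have hinj : Function.Injective ((projL W₂).toLinearMap.comp V₁.subtype) := by
      rw [← LinearMap.ker_eq_bot, LinearMap.ker_eq_bot']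
      intro m hm
      have hm' : projL W₂ (m : EuclideanSpace ℝ (Fin d)) = 0 := hm
      have h2 := hbound m m.2
      rw [hm', sub_zero] at h2
      have : ‖(m : EuclideanSpace ℝ (Fin d))‖ = 0 := by nlinarith [norm_nonneg (m : EuclideanSpace ℝ (Fin d))]
      ext1
      simpa using norm_eq_zero.mp this
    have hrank : Module.finrank ℝ V₂ = n := by
      have h1 : LinearMap.range ((projL W₂).toLinearMap.comp V₁.subtype) = V₂ := by
        rw [LinearMap.range_comp, Submodule.range_subtype]
      rw [← h1, LinearMap.finrank_range_of_inj hinj, hV₁]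
    refine ⟨V₂, hV₂W₂, hrank, ?_⟩
    have hεU : ∀ u ∈ V₁, ‖u - projL V₂ u‖ ≤ δ * ‖u‖ := by
      intro u hu
      calc ‖u - projL V₂ u‖ ≤ ‖u - projL W₂ u‖ :=
            norm_sub_projL_le V₂ u _ ⟨u, hu, rfl⟩
        _ ≤ δ * ‖u‖ := hbound u hu
    have hεV : ∀ v ∈ V₂, ‖v - projL V₁ v‖ ≤ (2*δ) * ‖v‖ := by
      rintro _ ⟨u, hu, rfl⟩
      set v := projL W₂ u with hv_def
      have h1 : ‖u - v‖ ≤ δ * ‖u‖ := hbound u hu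
      have h2 : ‖u‖ ≤ 2 * ‖v‖ := by
        have h3 : ‖u‖ ≤ ‖v‖ + ‖u - v‖ := by
          calc ‖u‖ = ‖v + (u - v)‖ := by congr 1; abel
            _ ≤ ‖v‖ + ‖u - v‖ := norm_add_le _ _
        nlinarith [norm_nonneg u, norm_nonneg v]
      calc ‖v - projL V₁ v‖ ≤ ‖v - u‖ := norm_sub_projL_le V₁ v u hu
        _ = ‖u - v‖ := norm_sub_rev _ _
        _ ≤ δ * ‖u‖ := h1
        _ ≤ (2*δ) * ‖v‖ := by nlinarith
    calc ‖projL V₁ - projL V₂‖ ≤ δ + 2*δ :=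
          key_bound V₁ V₂ δ (2*δ) hδ0 (by linarith) hεU hεV
      _ ≤ 4 * δ := by linarith
  · -- large distance: any n-dimensional subspace of W₂ works
    push_neg at hsmall
    obtain ⟨V₂, hV₂W₂, hrank⟩ := exists_sub_finrank W₂ n (by omega)
    refine ⟨V₂, hV₂W₂, hrank, ?_⟩
    calc ‖projL V₁ - projL V₂‖ ≤ ‖projL V₁‖ + ‖projL V₂‖ := norm_sub_le _ _
      _ ≤ 1 + 1 := add_le_add (norm_projL_le_one V₁) (norm_projL_le_one V₂)
      _ ≤ 4 * δ := by linarith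
end

section
/- Let $E \subset \mathbb{R}^d$ be an $n$-regular set with a system $\mathcal{D}$ of dyadic cubes, and let $\mu = \mathcal{H}^n|_E$. Suppose that for every $\epsilon > 0$ there exists $N = N(\epsilon) \in \mathbb{N}$ such that for all $Q \in \mathcal{D}$: $\mu(\{x \in Q : \#\{Q' \in \mathcal{D} : x \in Q' \subset Q,\ \beta(Q') \ge \epsilon\} \ge N\}) \le \tfrac{1}{2}\mu(Q)$. Then for all $\epsilon > 0$ and $Q_0 \in \mathcal{D}$: $\sum_{Q \subset Q_0, \beta(Q) \ge \epsilon} \mu(Q) \le 2N(\epsilon)\, \mu(Q_0)$ (i.e. $E$ satisfies the weak geometric lemma). -/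
open MeasureTheory Metric
open scoped ENNReal

/-- A system of Christ–David "dyadic cubes" on a set `E ⊆ ℝ^d`. A cube is recorded together
with its generation `j ∈ ℤ`; its side-length is `2^{-j}`. -/
structure DyadicSystem (d : ℕ) (E : Set (EuclideanSpace ℝ (Fin d))) where
  cubes : Set (ℤ × Set (EuclideanSpace ℝ (Fin d)))
  center : ℤ × Set (EuclideanSpace ℝ (Fin d)) → EuclideanSpace ℝ (Fin d)
  levels : Set ℤ
  levels_nonempty : levels.Nonempty
  levels_succ : ∀ j ∈ levels, j + 1 ∈ levels
  mem_levels : ∀ Q ∈ cubes, Q.1 ∈ levels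
  exists_cube : ∀ j ∈ levels, ∀ x ∈ E, ∃ Q ∈ cubes, Q.1 = j ∧ x ∈ Q.2
  subset_E : ∀ Q ∈ cubes, Q.2 ⊆ E
  nonempty : ∀ Q ∈ cubes, Q.2.Nonempty
  measurable : ∀ Q ∈ cubes, MeasurableSet Q.2
  disjoint_level : ∀ Q ∈ cubes, ∀ Q' ∈ cubes, Q.1 = Q'.1 → Q ≠ Q' → Disjoint Q.2 Q'.2
  nested : ∀ Q ∈ cubes, ∀ Q' ∈ cubes, Q.1 ≤ Q'.1 → Q'.2 ⊆ Q.2 ∨ Disjoint Q.2 Q'.2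
  cSmall : ℝ
  cBig : ℝ
  cSmall_pos : 0 < cSmall
  cSmall_le_cBig : cSmall ≤ cBig
  center_mem : ∀ Q ∈ cubes, center Q ∈ Q.2
  inner_ball : ∀ Q ∈ cubes, E ∩ ball (center Q) (cSmall * (2:ℝ) ^ (-Q.1)) ⊆ Q.2
  outer_ball : ∀ Q ∈ cubes, Q.2 ⊆ ball (center Q) (cBig * (2:ℝ) ^ (-Q.1))
  ball_mono : ∀ Q ∈ cubes, ∀ Q' ∈ cubes, Q.2 ⊆ Q'.2 →
    closedBall (center Q) (cBig * (2:ℝ) ^ (-Q.1)) ⊆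
      closedBall (center Q') (cBig * (2:ℝ) ^ (-Q'.1))

/-- The partial order on cubes: inclusion of the underlying sets, with ties (equal sets)
broken by the generation index, larger generation (smaller cube) being smaller. -/
private def cle {α : Type*} (Q R : ℤ × Set α) : Prop :=
  (Q.2 ⊆ R.2 ∧ Q.2 ≠ R.2) ∨ (Q.2 = R.2 ∧ R.1 ≤ Q.1)

private lemma cle_refl {α : Type*} (Q : ℤ × Set α) : cle Q Q := Or.inr ⟨rfl, le_rfl⟩

private lemma cle_sub {α : Type*} {Q R : ℤ × Set α} (h : cle Q R) : Q.2 ⊆ R.2 := by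
  rcases h with ⟨h, _⟩ | ⟨h, _⟩
  · exact h
  · exact h ▸ subset_rfl

private lemma cle_trans {α : Type*} {Q R S : ℤ × Set α} (h1 : cle Q R) (h2 : cle R S) :
    cle Q S := by
  rcases h1 with ⟨ha, hb⟩ | ⟨ha, hb⟩ <;> rcases h2 with ⟨hc, hd⟩ | ⟨hc, hd⟩
  · exact Or.inl ⟨ha.trans hc, fun he => hb (Set.Subset.antisymm ha (he ▸ hc))⟩
  · exact Or.inl ⟨by rw [← hc]; exact ha, by rw [← hc]; exact hb⟩
  · exact Or.inl ⟨by rw [ha]; exact hc, by rw [ha]; exact hd⟩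
  · exact Or.inr ⟨ha.trans hc, hd.trans hb⟩

private lemma cle_antisymm {α : Type*} {Q R : ℤ × Set α} (h1 : cle Q R) (h2 : cle R Q) :
    Q = R := by
  rcases h1 with ⟨ha, hb⟩ | ⟨ha, hb⟩
  · rcases h2 with ⟨hc, hd⟩ | ⟨hc, hd⟩
    · exact absurd (Set.Subset.antisymm ha hc) hb
    · exact absurd hc.symm hb
  · rcases h2 with ⟨hc, hd⟩ | ⟨hc, hd⟩
    · exact absurd ha hd.symm
    · exact Prod.ext (le_antisymm hd hb) ha

/-- **reformulation of the weak geometric lemma.** Let `E ⊆ ℝ^d` be an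
`n`-regular set with dyadic cubes `𝒟` and `μ = H^n|_E`, and let `β` be any assignment of
coefficients to cubes. Suppose for every `ε > 0` there is `N = N(ε)` such that for each cube
`Q`, the set of points of `Q` lying in at least `N` cubes `Q' ⊆ Q` with `β(Q') ≥ ε` has
measure at most `μ(Q)/2`. Then `∑_{Q ⊆ Q₀, β(Q) ≥ ε} μ(Q) ≤ 2 N(ε) μ(Q₀)` for every `Q₀`;
i.e. `E` satisfies the weak geometric lemma. -/
theorem wgl_reformulation (d n : ℕ) (C₀ : ℝ) (hC₀ : 1 ≤ C₀)
    (E : Set (EuclideanSpace ℝ (Fin d))) (hEclosed : IsClosed E)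
    (μ : Measure (EuclideanSpace ℝ (Fin d))) (hμ : μ = (μH[(n:ℝ)]).restrict E)
    (hreg : ∀ x ∈ E, ∀ r : ℝ, 0 < r → ENNReal.ofReal r < EMetric.diam E →
      ENNReal.ofReal (C₀⁻¹ * r ^ n) ≤ μ (closedBall x r) ∧
      μ (closedBall x r) ≤ ENNReal.ofReal (C₀ * r ^ n))
    (𝒟 : DyadicSystem d E)
    (β : ℤ × Set (EuclideanSpace ℝ (Fin d)) → ℝ)
    (N : ℝ → ℕ)
    (hN : ∀ ε : ℝ, 0 < ε → ∀ Q ∈ 𝒟.cubes,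
      μ {x ∈ Q.2 | ∃ F : Finset (ℤ × Set (EuclideanSpace ℝ (Fin d))),
          N ε ≤ F.card ∧
          ∀ Q' ∈ F, Q' ∈ 𝒟.cubes ∧ x ∈ Q'.2 ∧ Q'.2 ⊆ Q.2 ∧ ε ≤ β Q'} ≤ μ Q.2 / 2) :
    ∀ ε : ℝ, 0 < ε → ∀ Q₀ ∈ 𝒟.cubes,
      ∑' Q : {Q : ℤ × Set (EuclideanSpace ℝ (Fin d)) //
          Q ∈ 𝒟.cubes ∧ Q.2 ⊆ Q₀.2 ∧ ε ≤ β Q},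
        μ (Q : ℤ × Set (EuclideanSpace ℝ (Fin d))).2 ≤
      (2 * N ε : ℕ) * μ Q₀.2 := by
  classical
  intro ε hε Q₀ hQ₀
  -- Every cube has finite measure.
  have hcpos : 0 < 𝒟.cBig := lt_of_lt_of_le 𝒟.cSmall_pos 𝒟.cSmall_le_cBig
  have hfin : ∀ Q ∈ 𝒟.cubes, μ Q.2 ≠ ∞ := by
    intro Q hQ
    have hzE : 𝒟.center Q ∈ E := 𝒟.subset_E Q hQ (𝒟.center_mem Q hQ)
    have hrpos : (0:ℝ) < 𝒟.cBig * (2:ℝ) ^ (-Q.1) := by positivity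
    have hsub : Q.2 ⊆ closedBall (𝒟.center Q) (𝒟.cBig * (2:ℝ) ^ (-Q.1)) :=
      (𝒟.outer_ball Q hQ).trans ball_subset_closedBall
    by_cases hd : ENNReal.ofReal (𝒟.cBig * (2:ℝ) ^ (-Q.1)) < EMetric.diam E
    · exact ne_top_of_le_ne_top ENNReal.ofReal_ne_top
        ((measure_mono hsub).trans (hreg _ hzE _ hrpos hd).2)
    · push_neg at hd
      have hdiam_ne : EMetric.diam E ≠ ∞ := ne_top_of_le_ne_top ENNReal.ofReal_ne_top hd
      refine ne_top_of_le_ne_top ?_ (measure_mono (𝒟.subset_E Q hQ))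
      by_cases h0 : EMetric.diam E = 0
      · have hsing : E.Subsingleton := EMetric.diam_eq_zero_iff.1 h0
        have h1 : μ E ≤ 1 := by
          calc μ E = μH[(n:ℝ)] (E ∩ E) := by
                rw [hμ, Measure.restrict_apply' hEclosed.measurableSet]
            _ = μH[(n:ℝ)] E := by rw [Set.inter_self]
            _ ≤ 1 := Measure.hausdorffMeasure_le_one_of_subsingleton hsing (by positivity)
        exact ne_top_of_le_ne_top ENNReal.one_ne_top h1
      · have hcomp : IsCompact E := Metric.isCompact_iff_isClosed_bounded.2
          ⟨hEclosed, Metric.isBounded_iff_ediam_ne_top.mpr hdiam_ne⟩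
        have hD : 0 < (EMetric.diam E).toReal := ENNReal.toReal_pos h0 hdiam_ne
        set r' : ℝ := (EMetric.diam E).toReal / 2 with hr'
        have hr'pos : 0 < r' := by positivity
        have hr'lt : ENNReal.ofReal r' < EMetric.diam E := by
          rw [← ENNReal.ofReal_toReal hdiam_ne]
          exact (ENNReal.ofReal_lt_ofReal_iff hD).2 (by rw [hr']; linarith)
        obtain ⟨t, htE, htfin, hcover⟩ := finite_cover_balls_of_compact hcomp hr'pos
        have hlt : μ (⋃ x ∈ t, ball x r') < ∞ := measure_biUnion_lt_top htfin (fun x hx =>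
          (ne_top_of_le_ne_top ENNReal.ofReal_ne_top
            ((measure_mono ball_subset_closedBall).trans (hreg x (htE hx) r' hr'pos hr'lt).2)).lt_top)
        exact ne_top_of_le_ne_top hlt.ne (measure_mono hcover)
  by_cases hN0 : N ε = 0
  · -- Degenerate case: every cube has measure zero.
    have hzero : ∀ Q ∈ 𝒟.cubes, μ Q.2 = 0 := by
      intro Q hQ
      have h1 := hN ε hε Q hQ
      have hset : {x ∈ Q.2 | ∃ F : Finset (ℤ × Set (EuclideanSpace ℝ (Fin d))),
          N ε ≤ F.card ∧ ∀ Q' ∈ F, Q' ∈ 𝒟.cubes ∧ x ∈ Q'.2 ∧ Q'.2 ⊆ Q.2 ∧ ε ≤ β Q'}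
          = Q.2 := by
        refine Set.eq_of_subset_of_subset (fun x hx => hx.1) (fun x hx => ?_)
        exact ⟨hx, ∅, by simp [hN0], by simp⟩
      rw [hset] at h1
      by_contra h2
      exact absurd h1 (not_le.2 (ENNReal.half_lt_self h2 (hfin Q hQ)))
    have hz : ∀ Q : {Q : ℤ × Set (EuclideanSpace ℝ (Fin d)) //
        Q ∈ 𝒟.cubes ∧ Q.2 ⊆ Q₀.2 ∧ ε ≤ β Q},
        μ (Q : ℤ × Set (EuclideanSpace ℝ (Fin d))).2 = 0 := fun Q => hzero Q.1 Q.2.1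
    rw [ENNReal.tsum_eq_zero.2 hz]
    exact zero_le
  -- Main case : `N ε ≥ 1`.
  have hN1 : 1 ≤ N ε := Nat.one_le_iff_ne_zero.2 hN0
  rw [ENNReal.tsum_eq_iSup_sum]
  refine iSup_le fun F => ?_
  set G : Finset (ℤ × Set (EuclideanSpace ℝ (Fin d))) := F.image Subtype.val with hGdef
  have hGprop : ∀ Q ∈ G, Q ∈ 𝒟.cubes ∧ Q.2 ⊆ Q₀.2 ∧ ε ≤ β Q := by
    intro Q hQ
    rw [hGdef, Finset.mem_image] at hQ
    obtain ⟨a, _, rfl⟩ := hQ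
    exact a.2
  have hGcubes : ∀ Q ∈ G, Q ∈ 𝒟.cubes := fun Q h => (hGprop Q h).1
  have hsum_eq : ∑ Q ∈ F, μ (Q : ℤ × Set (EuclideanSpace ℝ (Fin d))).2
      = ∑ Q ∈ G, μ Q.2 := by
    rw [hGdef]
    exact (Finset.sum_image (g := Subtype.val)
      (f := fun Q : ℤ × Set (EuclideanSpace ℝ (Fin d)) => μ Q.2)
      (fun a _ b _ h => Subtype.ext h)).symm
  -- comparability of intersecting cubes
  have hcomp : ∀ Q ∈ 𝒟.cubes, ∀ R ∈ 𝒟.cubes, (Q.2 ∩ R.2).Nonempty → cle Q R ∨ cle R Q := by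
    intro Q hQ R hR hne
    obtain ⟨x, hxQ, hxR⟩ := hne
    rcases le_total Q.1 R.1 with h | h
    · rcases 𝒟.nested Q hQ R hR h with hsub | hdis
      · by_cases he : R.2 = Q.2
        · exact Or.inr (Or.inr ⟨he, h⟩)
        · exact Or.inr (Or.inl ⟨hsub, he⟩)
      · exact absurd hdis (Set.not_disjoint_iff.2 ⟨x, hxQ, hxR⟩)
    · rcases 𝒟.nested R hR Q hQ h with hsub | hdis
      · by_cases he : Q.2 = R.2
        · exact Or.inl (Or.inr ⟨he, h⟩)
        · exact Or.inl (Or.inl ⟨hsub, he⟩)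
      · exact absurd hdis (Set.not_disjoint_iff.2 ⟨x, hxR, hxQ⟩)
  -- the depth (rank from the top) of a cube in `G`
  set depth : (ℤ × Set (EuclideanSpace ℝ (Fin d))) → ℕ :=
    fun Q => (G.filter fun R => cle Q R).card with hdepthdef
  have hdepth_pos : ∀ Q ∈ G, 1 ≤ depth Q := by
    intro Q hQ
    rw [hdepthdef]
    exact Finset.card_pos.2 ⟨Q, Finset.mem_filter.2 ⟨hQ, cle_refl Q⟩⟩
  have hdepth_le : ∀ Q, depth Q ≤ G.card := by
    intro Q
    rw [hdepthdef]
    exact Finset.card_filter_le _ _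
  have hstrict : ∀ Q ∈ G, ∀ R, cle Q R → Q ≠ R → depth R < depth Q := by
    intro Q hQ R hQR hne
    rw [hdepthdef]
    apply Finset.card_lt_card
    have hsubset : (G.filter fun S => cle R S) ⊆ (G.filter fun S => cle Q S) := by
      intro S hS
      rcases Finset.mem_filter.1 hS with ⟨hSG, hRS⟩
      exact Finset.mem_filter.2 ⟨hSG, cle_trans hQR hRS⟩
    rw [Finset.ssubset_iff_of_subset hsubset]
    exact ⟨Q, Finset.mem_filter.2 ⟨hQ, cle_refl Q⟩,
      fun hmem => hne (cle_antisymm hQR (Finset.mem_filter.1 hmem).2)⟩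
  have hchain : ∀ Q ∈ 𝒟.cubes, ∀ R ∈ G, ∀ S ∈ G, cle Q R → cle Q S →
      cle R S ∨ cle S R := by
    intro Q hQ R hR S hS h1 h2
    obtain ⟨x, hx⟩ := 𝒟.nonempty Q hQ
    exact hcomp R (hGcubes R hR) S (hGcubes S hS) ⟨x, cle_sub h1 hx, cle_sub h2 hx⟩
  -- existence of ancestors at every prescribed depth
  have hexists0 : ∀ k : ℕ, ∀ Q ∈ G, k < depth Q →
      ∃ R ∈ G, cle Q R ∧ depth R = depth Q - k := by
    intro k
    induction k with
    | zero => exact fun Q hQ _ => ⟨Q, hQ, cle_refl Q, by simp⟩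
    | succ k ih =>
      intro Q hQ hk
      obtain ⟨R, hRG, hQR, hdR⟩ := ih Q hQ (Nat.lt_of_succ_lt hk)
      have hdRc : depth R = (G.filter fun S => cle R S).card := by rw [hdepthdef]
      have hdR2 : 2 ≤ depth R := by omega
      have hRmem : R ∈ G.filter fun S => cle R S := Finset.mem_filter.2 ⟨hRG, cle_refl R⟩
      have hScard : 0 < ((G.filter fun S => cle R S).erase R).card := by
        rw [Finset.card_erase_of_mem hRmem]
        omega
      obtain ⟨R', hR'S, hmax⟩ :=
        Finset.exists_max_image ((G.filter fun S => cle R S).erase R) depth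
          (Finset.card_pos.1 hScard)
      have hR'A : R' ∈ G.filter fun S => cle R S := Finset.mem_of_mem_erase hR'S
      have hR'G : R' ∈ G := (Finset.mem_filter.1 hR'A).1
      have hRR' : cle R R' := (Finset.mem_filter.1 hR'A).2
      have hne : R' ≠ R := Finset.ne_of_mem_erase hR'S
      have hmin : ∀ S ∈ (G.filter fun S => cle R S).erase R, cle R' S := by
        intro S hSe
        have hSA := Finset.mem_of_mem_erase hSe
        have hSG := (Finset.mem_filter.1 hSA).1
        have hRS := (Finset.mem_filter.1 hSA).2
        rcases hchain R (hGcubes R hRG) R' hR'G S hSG hRR' hRS with h | h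
        · exact h
        · by_cases heq : S = R'
          · exact heq ▸ cle_refl R'
          · have h2 := hstrict S hSG R' h heq
            have h3 := hmax S hSe
            omega
      have hAeq : (G.filter fun S => cle R' S) = (G.filter fun S => cle R S).erase R := by
        apply Finset.Subset.antisymm
        · intro S hS
          rcases Finset.mem_filter.1 hS with ⟨hSG, hR'le⟩
          refine Finset.mem_erase.2 ⟨?_, Finset.mem_filter.2 ⟨hSG, cle_trans hRR' hR'le⟩⟩
          rintro rfl
          exact hne (cle_antisymm hRR' hR'le).symm
        · intro S hSe
          exact Finset.mem_filter.2
            ⟨(Finset.mem_filter.1 (Finset.mem_of_mem_erase hSe)).1, hmin S hSe⟩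
      refine ⟨R', hR'G, cle_trans hQR hRR', ?_⟩
      have hdR'c : depth R' = (G.filter fun S => cle R' S).card := by rw [hdepthdef]
      rw [hdR'c, hAeq, Finset.card_erase_of_mem hRmem]
      omega
  have hex : ∀ Q ∈ G, ∀ i : ℕ, 1 ≤ i → i ≤ depth Q → ∃ R ∈ G, cle Q R ∧ depth R = i := by
    intro Q hQ i h1 h2
    obtain ⟨R, h, h', h''⟩ := hexists0 (depth Q - i) Q hQ (by omega)
    exact ⟨R, h, h', by omega⟩
  -- the generations and their unions
  set D : ℕ → Finset (ℤ × Set (EuclideanSpace ℝ (Fin d))) :=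
    fun j => G.filter fun Q => depth Q = j with hDdef
  set U : ℕ → Set (EuclideanSpace ℝ (Fin d)) := fun j => ⋃ Q ∈ D j, Q.2 with hUdef
  have hDmem : ∀ j, ∀ Q ∈ D j, Q ∈ G ∧ depth Q = j := by
    intro j Q hQ
    rw [hDdef] at hQ
    exact Finset.mem_filter.1 hQ
  have hDmem' : ∀ j, ∀ Q, Q ∈ G → depth Q = j → Q ∈ D j := by
    intro j Q h1 h2
    rw [hDdef]
    exact Finset.mem_filter.2 ⟨h1, h2⟩
  have hUsub : ∀ i j : ℕ, 1 ≤ i → i ≤ j → U j ⊆ U i := by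
    intro i j h1 h2 x hx
    rw [hUdef] at hx ⊢
    obtain ⟨Q, hQD, hxQ⟩ := Set.mem_iUnion₂.1 hx
    obtain ⟨hQG, hQd⟩ := hDmem j Q hQD
    obtain ⟨R, hRG, hQR, hdR⟩ := hex Q hQG i h1 (by omega)
    exact Set.mem_iUnion₂.2 ⟨R, hDmem' i R hRG hdR, cle_sub hQR hxQ⟩
  have hDsum : ∀ j, μ (U j) = ∑ Q ∈ D j, μ Q.2 := by
    intro j
    rw [hUdef]
    apply measure_biUnion_finset
    · intro Q hQ R hR hne
      obtain ⟨hQG, hQd⟩ := hDmem j Q (Finset.mem_coe.1 hQ)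
      obtain ⟨hRG, hRd⟩ := hDmem j R (Finset.mem_coe.1 hR)
      by_contra hdis
      obtain ⟨x, hxQ, hxR⟩ := Set.not_disjoint_iff.1 hdis
      rcases hcomp Q (hGcubes Q hQG) R (hGcubes R hRG) ⟨x, hxQ, hxR⟩ with h | h
      · have := hstrict Q hQG R h hne
        omega
      · have := hstrict R hRG Q h (Ne.symm hne)
        omega
    · intro Q hQ
      exact 𝒟.measurable Q (hGcubes Q (hDmem j Q hQ).1)
  -- the halving step
  have hhalf : ∀ r : ℕ, 1 ≤ r → μ (U (r + N ε)) ≤ μ (U r) / 2 := by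
    intro r hr
    have hsubbad : U (r + N ε) ⊆ ⋃ R ∈ D r,
        {x ∈ R.2 | ∃ Fw : Finset (ℤ × Set (EuclideanSpace ℝ (Fin d))),
          N ε ≤ Fw.card ∧ ∀ Q' ∈ Fw, Q' ∈ 𝒟.cubes ∧ x ∈ Q'.2 ∧ Q'.2 ⊆ R.2 ∧ ε ≤ β Q'} := by
      intro x hx
      rw [hUdef] at hx
      obtain ⟨Q, hQD, hxQ⟩ := Set.mem_iUnion₂.1 hx
      obtain ⟨hQG, hQd⟩ := hDmem (r + N ε) Q hQD
      obtain ⟨R, hRG, hQR, hdR⟩ := hex Q hQG r hr (by omega)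
      refine Set.mem_iUnion₂.2 ⟨R, hDmem' r R hRG hdR, cle_sub hQR hxQ, ?_⟩
      -- the witness family
      have hpick : ∀ i ∈ Finset.Icc r (r + N ε - 1),
          ∃ R', R' ∈ G ∧ cle Q R' ∧ depth R' = i := by
        intro i hi
        rw [Finset.mem_Icc] at hi
        obtain ⟨R', h1, h2, h3⟩ := hex Q hQG i (by omega) (by omega)
        exact ⟨R', h1, h2, h3⟩
      choose! f hf1 hf2 hf3 using hpick
      refine ⟨G.filter fun R' => cle Q R' ∧ r ≤ depth R', ?_, ?_⟩
      · -- cardinality bound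
        have hIcc : (Finset.Icc r (r + N ε - 1)).card = N ε := by
          rw [Nat.card_Icc]; omega
        rw [← hIcc]
        apply Finset.card_le_card_of_injOn f
        · intro i hi
          have h1 := hf1 i hi
          have h2 := hf2 i hi
          have h3 := hf3 i hi
          rw [Finset.mem_coe, Finset.mem_Icc] at hi
          exact Finset.mem_coe.2 (Finset.mem_filter.2 ⟨h1, h2, by omega⟩)
        · intro i hi j hj hij
          have h3i := hf3 i hi
          have h3j := hf3 j hj
          rw [← h3i, ← h3j, hij]
      · intro Q' hQ'
        obtain ⟨hQ'G, hQle, hQdep⟩ := Finset.mem_filter.1 hQ'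
        refine ⟨hGcubes Q' hQ'G, cle_sub hQle hxQ, ?_, (hGprop Q' hQ'G).2.2⟩
        rcases hchain Q (hGcubes Q hQG) Q' hQ'G R hRG hQle hQR with h | h
        · exact cle_sub h
        · by_cases heq : R = Q'
          · exact heq ▸ subset_rfl
          · exfalso
            have h2 := hstrict R hRG Q' h heq
            omega
    calc μ (U (r + N ε))
        ≤ μ (⋃ R ∈ D r, {x ∈ R.2 | ∃ Fw : Finset (ℤ × Set (EuclideanSpace ℝ (Fin d))),
            N ε ≤ Fw.card ∧ ∀ Q' ∈ Fw, Q' ∈ 𝒟.cubes ∧ x ∈ Q'.2 ∧ Q'.2 ⊆ R.2 ∧ ε ≤ β Q'}) :=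
          measure_mono hsubbad
      _ ≤ ∑ R ∈ D r, μ {x ∈ R.2 | ∃ Fw : Finset (ℤ × Set (EuclideanSpace ℝ (Fin d))),
            N ε ≤ Fw.card ∧ ∀ Q' ∈ Fw, Q' ∈ 𝒟.cubes ∧ x ∈ Q'.2 ∧ Q'.2 ⊆ R.2 ∧ ε ≤ β Q'} :=
          measure_biUnion_finset_le _ _
      _ ≤ ∑ R ∈ D r, μ R.2 / 2 :=
          Finset.sum_le_sum fun R hR => hN ε hε R (hGcubes R (hDmem r R hR).1)
      _ = (∑ R ∈ D r, μ R.2) / 2 := by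
          simp only [div_eq_mul_inv, Finset.sum_mul]
      _ = μ (U r) / 2 := by rw [hDsum r]
  -- geometric decay
  have hdecay : ∀ k : ℕ, μ (U (1 + k * N ε)) ≤ μ Q₀.2 * 2⁻¹ ^ k := by
    intro k
    induction k with
    | zero =>
      simp only [Nat.zero_mul, Nat.add_zero, pow_zero, mul_one]
      apply measure_mono
      intro x hx
      rw [hUdef] at hx
      obtain ⟨Q, hQD, hxQ⟩ := Set.mem_iUnion₂.1 hx
      exact (hGprop Q (hDmem 1 Q hQD).1).2.1 hxQ
    | succ k ih =>
      have h1 : 1 + (k + 1) * N ε = (1 + k * N ε) + N ε := by ring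
      rw [h1]
      calc μ (U ((1 + k * N ε) + N ε)) ≤ μ (U (1 + k * N ε)) / 2 := hhalf _ (by omega)
        _ ≤ (μ Q₀.2 * 2⁻¹ ^ k) / 2 := ENNReal.div_le_div_right ih 2
        _ = μ Q₀.2 * 2⁻¹ ^ (k + 1) := by rw [div_eq_mul_inv, pow_succ, mul_assoc]
  have hUj : ∀ j : ℕ, 1 ≤ j → μ (U j) ≤ μ Q₀.2 * 2⁻¹ ^ ((j - 1) / N ε) := by
    intro j hj
    have hdm := Nat.div_mul_le_self (j - 1) (N ε)
    exact le_trans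
      (measure_mono (hUsub (1 + ((j - 1) / N ε) * N ε) j (by omega) (by omega)))
      (hdecay _)
  -- the final computation
  have hkey : ∑ j ∈ Finset.Icc 1 G.card, (2⁻¹ : ℝ≥0∞) ^ ((j - 1) / N ε)
      ≤ ((2 * N ε : ℕ) : ℝ≥0∞) := by
    rw [Finset.sum_comp (fun k => (2⁻¹ : ℝ≥0∞) ^ k) (fun j => (j - 1) / N ε)]
    have hcard : ∀ k : ℕ,
        ((Finset.Icc 1 G.card).filter (fun j => (j - 1) / N ε = k)).card ≤ N ε := by
      intro k
      have hsub2 : (Finset.Icc 1 G.card).filter (fun j => (j - 1) / N ε = k)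
          ⊆ Finset.Icc (k * N ε + 1) (k * N ε + N ε) := by
        intro j hj
        obtain ⟨hj1, hj2⟩ := Finset.mem_filter.1 hj
        obtain ⟨hj3, hj4⟩ := Finset.mem_Icc.1 hj1
        have h5 : k * N ε ≤ j - 1 := by
          rw [← hj2]; exact Nat.div_mul_le_self _ _
        have h6 : j - 1 < (k + 1) * N ε :=
          (Nat.div_lt_iff_lt_mul (Nat.pos_of_ne_zero hN0)).1
            (by rw [hj2]; exact Nat.lt_succ_self k)
        rw [add_mul, one_mul] at h6
        rw [Finset.mem_Icc]
        omega
      calc _ ≤ (Finset.Icc (k * N ε + 1) (k * N ε + N ε)).card := Finset.card_le_card hsub2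
        _ = N ε := by rw [Nat.card_Icc]; omega
    calc ∑ k ∈ (Finset.Icc 1 G.card).image (fun j => (j - 1) / N ε),
          ((Finset.Icc 1 G.card).filter (fun j => (j - 1) / N ε = k)).card • (2⁻¹ : ℝ≥0∞) ^ k
        ≤ ∑ k ∈ (Finset.Icc 1 G.card).image (fun j => (j - 1) / N ε),
            (N ε : ℝ≥0∞) * (2⁻¹ : ℝ≥0∞) ^ k := by
          refine Finset.sum_le_sum fun k _ => ?_
          rw [nsmul_eq_mul]
          exact mul_le_mul_left (Nat.cast_le.2 (hcard k)) _
      _ = (N ε : ℝ≥0∞) * ∑ k ∈ (Finset.Icc 1 G.card).image (fun j => (j - 1) / N ε),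
            (2⁻¹ : ℝ≥0∞) ^ k := by rw [Finset.mul_sum]
      _ ≤ (N ε : ℝ≥0∞) * ∑' k : ℕ, (2⁻¹ : ℝ≥0∞) ^ k :=
          mul_le_mul_right (ENNReal.sum_le_tsum _) _
      _ = (N ε : ℝ≥0∞) * 2 := by
          rw [ENNReal.tsum_geometric, ENNReal.one_sub_inv_two, inv_inv]
      _ = ((2 * N ε : ℕ) : ℝ≥0∞) := by push_cast; ring
  calc ∑ Q ∈ F, μ (Q : ℤ × Set (EuclideanSpace ℝ (Fin d))).2
      = ∑ Q ∈ G, μ Q.2 := hsum_eq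
    _ = ∑ j ∈ Finset.Icc 1 G.card, ∑ Q ∈ G.filter (fun Q => depth Q = j), μ Q.2 :=
        (Finset.sum_fiberwise_of_maps_to
          (fun Q hQ => Finset.mem_Icc.2 ⟨hdepth_pos Q hQ, hdepth_le Q⟩) _).symm
    _ = ∑ j ∈ Finset.Icc 1 G.card, μ (U j) := by
        refine Finset.sum_congr rfl fun j hj => ?_
        rw [hDsum j, hDdef]
    _ ≤ ∑ j ∈ Finset.Icc 1 G.card, μ Q₀.2 * 2⁻¹ ^ ((j - 1) / N ε) :=
        Finset.sum_le_sum fun j hj => hUj j (Finset.mem_Icc.1 hj).1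
    _ = (∑ j ∈ Finset.Icc 1 G.card, (2⁻¹ : ℝ≥0∞) ^ ((j - 1) / N ε)) * μ Q₀.2 := by
        rw [Finset.sum_mul]
        exact Finset.sum_congr rfl fun j _ => mul_comm _ _
    _ ≤ ((2 * N ε : ℕ) : ℝ≥0∞) * μ Q₀.2 := mul_le_mul_left hkey _
end
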